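/- Let A, A', B, B', C, C' be nonempty finite types, 𝓔₁ a channel from A' × B' to A × B, and 𝓔₂ a channel from B' × C' to B × C. Then 𝓔₁ and 𝓔₂ are compatible if and only if there exists a positive semidefinite matrix ρ indexed by (A × B × C) × (A' × B' × C') such that, after canonical reindexing, the partial trace of ρ over the output factor C equals J(𝓔₁) ⊗ ((1 / (Fintype.card C' : ℂ)) • (1 : Matrix C' C' ℂ)), and the partial trace of ρ over the output factor A equals J(𝓔₂) ⊗ ((1 / (Fintype.card A' : ℂ)) • (1 : Matrix A' A' ℂ)). -/

import Mathlib

open Matrix Kronecker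
open scoped ComplexOrder

noncomputable section

/-- A quantum state: positive semidefinite with unit trace. -/
def IsState {n : Type*} [Fintype n] (ρ : Matrix n n ℂ) : Prop :=
  ρ.PosSemidef ∧ ρ.trace = 1

/-- The Choi matrix of a linear map on matrices. -/
def choi {n m : Type*} [Fintype n] [DecidableEq n]
    (𝓔 : Matrix n n ℂ →ₗ[ℂ] Matrix m m ℂ) : Matrix (m × n) (m × n) ℂ :=
  Matrix.of fun p q =>
    (1 / (Fintype.card n : ℂ)) * 𝓔 (Matrix.single p.2 q.2 1) p.1 q.1

/-- A quantum channel: trace preserving and completely positive. -/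
def IsChannel {n m : Type*} [Fintype n] [DecidableEq n] [Fintype m]
    (𝓔 : Matrix n n ℂ →ₗ[ℂ] Matrix m m ℂ) : Prop :=
  (∀ ρ : Matrix n n ℂ, (𝓔 ρ).trace = ρ.trace) ∧ (choi 𝓔).PosSemidef

/-- Partial trace over the second (right) factor. -/
def trR {a b : Type*} [Fintype b] (M : Matrix (a × b) (a × b) ℂ) : Matrix a a ℂ :=
  Matrix.of fun i j => ∑ k, M (i, k) (j, k)

/-- Partial trace over the first (left) factor. -/
def trL {a b : Type*} [Fintype a] (M : Matrix (a × b) (a × b) ℂ) : Matrix b b ℂ :=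
  Matrix.of fun i j => ∑ k, M (k, i) (k, j)

/-- Partial trace over the third factor of a triple product. -/
def trC3 {a b c : Type*} [Fintype c] (M : Matrix (a × b × c) (a × b × c) ℂ) :
    Matrix (a × b) (a × b) ℂ :=
  Matrix.of fun i j => ∑ k, M (i.1, i.2, k) (j.1, j.2, k)

/-- Compatibility of two local channels with a single global channel. -/
def Compatible {A A' B B' C C' : Type*}
    [Fintype A] [Fintype A'] [Fintype B] [Fintype B'] [Fintype C] [Fintype C']
    [DecidableEq A'] [DecidableEq B'] [DecidableEq C']
    (𝓔₁ : Matrix (A' × B') (A' × B') ℂ →ₗ[ℂ] Matrix (A × B) (A × B) ℂ)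
    (𝓔₂ : Matrix (B' × C') (B' × C') ℂ →ₗ[ℂ] Matrix (B × C) (B × C) ℂ) : Prop :=
  ∃ 𝓔 : Matrix (A' × B' × C') (A' × B' × C') ℂ →ₗ[ℂ] Matrix (A × B × C) (A × B × C) ℂ,
    IsChannel 𝓔 ∧ ∀ ρ : Matrix (A' × B' × C') (A' × B' × C') ℂ, IsState ρ →
      trC3 (𝓔 ρ) = 𝓔₁ (trC3 ρ) ∧ trL (𝓔 ρ) = 𝓔₂ (trL ρ)

/-- Partial trace over the output factor `C`, composed with the canonical reindexing
`(A × B) × (A' × B' × C') ≃ ((A × B) × (A' × B')) × C'`. -/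
def trOutC {A B C A' B' C' : Type*} [Fintype C]
    (M : Matrix ((A × B × C) × (A' × B' × C')) ((A × B × C) × (A' × B' × C')) ℂ) :
    Matrix (((A × B) × (A' × B')) × C') (((A × B) × (A' × B')) × C') ℂ :=
  Matrix.of fun i j => ∑ k,
    M ((i.1.1.1, i.1.1.2, k), (i.1.2.1, i.1.2.2, i.2))
      ((j.1.1.1, j.1.1.2, k), (j.1.2.1, j.1.2.2, j.2))

/-- Partial trace over the output factor `A`, composed with the canonical reindexing
`(B × C) × (A' × B' × C') ≃ ((B × C) × (B' × C')) × A'`. -/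
def trOutA {A B C A' B' C' : Type*} [Fintype A]
    (M : Matrix ((A × B × C) × (A' × B' × C')) ((A × B × C) × (A' × B' × C')) ℂ) :
    Matrix (((B × C) × (B' × C')) × A') (((B × C) × (B' × C')) × A') ℂ :=
  Matrix.of fun i j => ∑ k,
    M ((k, i.1.1.1, i.1.1.2), (i.2, i.1.2.1, i.1.2.2))
      ((k, j.1.1.1, j.1.1.2), (j.2, j.1.2.1, j.1.2.2))

namespace SDPAux

/-! ### Outer products and the fact that states span all matrices -/

def outer {n : Type*} (v : n → ℂ) : Matrix n n ℂ :=
  Matrix.of fun i j => v i * (starRingEnd ℂ) (v j)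

variable {n : Type*} [Fintype n]

lemma outer_posSemidef (v : n → ℂ) : (outer v).PosSemidef := by
  rw [Matrix.posSemidef_iff_dotProduct_mulVec]
  constructor
  · ext i j
    simp [outer, Matrix.conjTranspose_apply, mul_comm]
  · intro x
    have h : dotProduct (star x) (outer v *ᵥ x)
        = (∑ i, (starRingEnd ℂ) (x i) * v i) *
          (starRingEnd ℂ) (∑ i, (starRingEnd ℂ) (x i) * v i) := by
      simp only [dotProduct, outer, Matrix.mulVec, Matrix.of_apply, Pi.star_apply,
        Finset.sum_mul, Finset.mul_sum, map_sum, _root_.map_mul, RingHom.id_apply,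
        Complex.conj_conj, RCLike.star_def]
      rw [Finset.sum_comm]
      refine Finset.sum_congr rfl fun i _ => Finset.sum_congr rfl fun j _ => ?_
      ring
    rw [h, Complex.mul_conj]
    exact_mod_cast Complex.normSq_nonneg _

lemma trace_outer (v : n → ℂ) :
    (outer v).trace = ((∑ i, Complex.normSq (v i) : ℝ) : ℂ) := by
  simp [Matrix.trace, Matrix.diag, outer, Complex.mul_conj]

lemma posSemidef_real_smul {M : Matrix n n ℂ} (hM : M.PosSemidef) {c : ℝ} (hc : 0 ≤ c) :
    (((c : ℂ)) • M).PosSemidef := by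
  rw [Matrix.posSemidef_iff_dotProduct_mulVec]
  constructor
  · ext i j
    simp [Matrix.conjTranspose_apply, hM.1.apply, Complex.conj_ofReal]
  · intro x
    rw [Matrix.smul_mulVec, dotProduct_smul, smul_eq_mul]
    exact mul_nonneg (by exact_mod_cast hc) (hM.dotProduct_mulVec_nonneg x)

set_option linter.unusedSectionVars false in
lemma stdBasisMatrix_eq_outer [DecidableEq n] (k l : n) :
    Matrix.single k l (1 : ℂ) =
      (2:ℂ)⁻¹ • (outer (fun i => (if i = k then (1:ℂ) else 0) + (if i = l then 1 else 0))
        + Complex.I • outer (fun i => (if i = k then (1:ℂ) else 0)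
            + Complex.I * (if i = l then 1 else 0))
        - (1 + Complex.I) • (outer (fun i => (if i = k then (1:ℂ) else 0))
            + outer (fun i => (if i = l then (1:ℂ) else 0)))) := by
  ext i j
  simp only [Matrix.single, outer, Matrix.smul_apply, Matrix.add_apply,
    Matrix.sub_apply, Matrix.of_apply, smul_eq_mul, map_add, _root_.map_mul,
    _root_.map_one, map_zero, apply_ite (starRingEnd ℂ), Complex.conj_I]
  by_cases hik : i = k <;> by_cases hjl : j = l <;> by_cases hil : i = l <;>
    by_cases hjk : j = k <;>
    simp_all [eq_comm] <;> ring_nf <;>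
    simp_all [Complex.ext_iff, pow_succ, Complex.I_sq] <;>
    (try constructor) <;>
    simp [show Complex.I ^ 3 = -Complex.I by rw [pow_succ, Complex.I_sq]; ring] <;> norm_num

lemma linearMap_eq_of_isState {V : Type*} [AddCommGroup V] [Module ℂ V] [DecidableEq n]
    (f g : Matrix n n ℂ →ₗ[ℂ] V)
    (h : ∀ ρ, IsState ρ → f ρ = g ρ) (X : Matrix n n ℂ) : f X = g X := by
  have houter : ∀ v : n → ℂ, f (outer v) = g (outer v) := by
    intro v
    by_cases hv : ∀ i, v i = 0
    · have h0 : outer v = 0 := by ext i j; simp [outer, hv]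
      simp [h0]
    · push_neg at hv
      set t : ℝ := ∑ i, Complex.normSq (v i) with ht
      have htpos : 0 < t := by
        obtain ⟨i, hi⟩ := hv
        refine Finset.sum_pos' (fun _ _ => Complex.normSq_nonneg _)
          ⟨i, Finset.mem_univ i, ?_⟩
        simpa [Complex.normSq_pos] using hi
      have hstate : IsState (((t : ℂ))⁻¹ • outer v) := by
        constructor
        · have := posSemidef_real_smul (outer_posSemidef v) (c := t⁻¹) (by positivity)
          simpa [Complex.ofReal_inv] using this
        · rw [Matrix.trace_smul, trace_outer, ← ht, smul_eq_mul,
            inv_mul_cancel₀ (by exact_mod_cast htpos.ne')]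
      have heq := h _ hstate
      have hcancel : (t : ℂ) * ((t : ℂ))⁻¹ = 1 :=
        mul_inv_cancel₀ (by exact_mod_cast htpos.ne')
      calc f (outer v) = (t : ℂ) • f (((t : ℂ))⁻¹ • outer v) := by
            rw [← _root_.map_smul, smul_smul, hcancel, one_smul]
        _ = (t : ℂ) • g (((t : ℂ))⁻¹ • outer v) := by rw [heq]
        _ = g (outer v) := by rw [← _root_.map_smul, smul_smul, hcancel, one_smul]
  have hstd : ∀ k l : n, f (Matrix.single k l 1) = g (Matrix.single k l 1) := by
    intro k l
    rw [stdBasisMatrix_eq_outer]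
    simp only [_root_.map_smul, map_add, map_sub, houter]
  calc f X = ∑ k, ∑ l, X k l • f (Matrix.single k l 1) := by
        conv_lhs => rw [Matrix.matrix_eq_sum_single X]
        rw [map_sum]
        refine Finset.sum_congr rfl fun k _ => ?_
        rw [map_sum]
        refine Finset.sum_congr rfl fun l _ => ?_
        rw [← _root_.map_smul, Matrix.smul_single, smul_eq_mul, mul_one]
    _ = ∑ k, ∑ l, X k l • g (Matrix.single k l 1) := by simp only [hstd]
    _ = g X := by
        conv_rhs => rw [Matrix.matrix_eq_sum_single X]
        rw [map_sum]
        refine Finset.sum_congr rfl fun k _ => ?_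
        rw [map_sum]
        refine Finset.sum_congr rfl fun l _ => ?_
        rw [← _root_.map_smul, Matrix.smul_single, smul_eq_mul, mul_one]

/-! ### Linear-map versions of the partial traces, and their action on basis matrices -/

def trC3L (a b c : Type*) [Fintype a] [Fintype b] [Fintype c] :
    Matrix (a × b × c) (a × b × c) ℂ →ₗ[ℂ] Matrix (a × b) (a × b) ℂ where
  toFun := trC3
  map_add' M N := by ext i j; simp [trC3, Finset.sum_add_distrib]
  map_smul' r M := by ext i j; simp [trC3, Finset.mul_sum]

def trLL (a b : Type*) [Fintype a] [Fintype b] :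
    Matrix (a × b) (a × b) ℂ →ₗ[ℂ] Matrix b b ℂ where
  toFun := trL
  map_add' M N := by ext i j; simp [trL, Finset.sum_add_distrib]
  map_smul' r M := by ext i j; simp [trL, Finset.mul_sum]

@[simp] lemma trC3L_apply {a b c : Type*} [Fintype a] [Fintype b] [Fintype c]
    (M : Matrix (a × b × c) (a × b × c) ℂ) : trC3L a b c M = trC3 M := rfl

@[simp] lemma trLL_apply {a b : Type*} [Fintype a] [Fintype b]
    (M : Matrix (a × b) (a × b) ℂ) : trLL a b M = trL M := rfl

lemma trC3_stdBasisMatrix {a b c : Type*} [Fintype a] [Fintype b] [Fintype c]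
    [DecidableEq a] [DecidableEq b] [DecidableEq c] (p q : a × b × c) :
    trC3 (Matrix.single p q (1:ℂ)) =
      if p.2.2 = q.2.2 then Matrix.single (p.1, p.2.1) (q.1, q.2.1) 1 else 0 := by
  obtain ⟨p₁, p₂, p₃⟩ := p; obtain ⟨q₁, q₂, q₃⟩ := q
  ext ⟨i₁, i₂⟩ ⟨j₁, j₂⟩
  by_cases h5 : p₃ = q₃ <;>
    by_cases h1 : i₁ = p₁ <;> by_cases h2 : i₂ = p₂ <;> by_cases h3 : j₁ = q₁ <;>
    by_cases h4 : j₂ = q₂ <;>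
    simp_all [trC3, Matrix.single, Prod.ext_iff, Finset.sum_ite_eq,
      Finset.filter_eq, eq_comm] <;>
    (rw [Finset.filter_false_of_mem (fun x _ h => h5 (h.1.trans h.2.symm))]; simp)

lemma trL_stdBasisMatrix {a b : Type*} [Fintype a] [DecidableEq a] [DecidableEq b]
    (p q : a × b) :
    trL (Matrix.single p q (1:ℂ)) =
      if p.1 = q.1 then Matrix.single p.2 q.2 1 else 0 := by
  obtain ⟨p₁, p₂⟩ := p; obtain ⟨q₁, q₂⟩ := q
  ext i j
  by_cases h5 : p₁ = q₁ <;> by_cases h1 : i = p₂ <;> by_cases h2 : j = q₂ <;>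
    simp_all [trL, Matrix.single, Prod.ext_iff, Finset.sum_ite_eq,
      Finset.filter_eq, eq_comm] <;>
    (rw [Finset.filter_false_of_mem (fun x _ h => h5 (h.1.trans h.2.symm))]; simp)

/-! ### The channel associated with a Choi matrix -/

def fromChoi {n m : Type*} [Fintype n] [Fintype m] (ρ : Matrix (m × n) (m × n) ℂ) :
    Matrix n n ℂ →ₗ[ℂ] Matrix m m ℂ where
  toFun X := Matrix.of fun i j => (Fintype.card n : ℂ) * ∑ k, ∑ l, ρ (i,k) (j,l) * X k l
  map_add' X Y := by
    ext i j
    simp [mul_add, Finset.sum_add_distrib]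
  map_smul' r X := by
    ext i j
    simp only [Matrix.of_apply, Matrix.smul_apply, smul_eq_mul, RingHom.id_apply]
    have h : ∀ k l, ρ (i,k) (j,l) * (r * X k l) = r * (ρ (i,k) (j,l) * X k l) :=
      fun _ _ => by ring
    simp only [h, ← Finset.mul_sum]
    ring

lemma apply_eq_sum {n m : Type*} [Fintype n] [DecidableEq n] [Fintype m]
    (𝓕 : Matrix n n ℂ →ₗ[ℂ] Matrix m m ℂ) (X : Matrix n n ℂ) (i j : m) :
    𝓕 X i j = ∑ k, ∑ l, X k l * 𝓕 (Matrix.single k l 1) i j := by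
  conv_lhs => rw [Matrix.matrix_eq_sum_single X]
  rw [map_sum, Matrix.sum_apply]
  refine Finset.sum_congr rfl fun k _ => ?_
  rw [map_sum, Matrix.sum_apply]
  refine Finset.sum_congr rfl fun l _ => ?_
  have h : Matrix.single k l (X k l) = X k l • Matrix.single k l (1:ℂ) := by
    rw [Matrix.smul_single, smul_eq_mul, mul_one]
  rw [h, _root_.map_smul, Matrix.smul_apply, smul_eq_mul]

lemma choi_fromChoi {n m : Type*} [Fintype n] [DecidableEq n] [Nonempty n] [Fintype m]
    (ρ : Matrix (m × n) (m × n) ℂ) : choi (fromChoi ρ) = ρ := by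
  ext ⟨i, k⟩ ⟨j, l⟩
  have hN : (Fintype.card n : ℂ) ≠ 0 := by
    simp [Fintype.card_ne_zero]
  simp only [choi, fromChoi, Matrix.of_apply, LinearMap.coe_mk, AddHom.coe_mk]
  rw [Finset.sum_comm]
  simp only [Matrix.single, Matrix.of_apply, Prod.mk.injEq, mul_ite, mul_one, mul_zero]
  rw [show ∀ f : n → n → ℂ, (∑ l' : n, ∑ k' : n, if k = k' ∧ l = l' then f k' l' else 0)
      = f k l from ?_]
  · field_simp
  · intro f
    rw [Finset.sum_eq_single l, Finset.sum_eq_single k] <;> simp +contextual [eq_comm]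

lemma trace_stdBasisMatrix' {n : Type*} [Fintype n] [DecidableEq n] (k l : n) :
    (Matrix.single k l (1:ℂ)).trace = if k = l then 1 else 0 := by
  by_cases h : k = l <;>
    simp_all [Matrix.trace, Matrix.diag, Matrix.single, Finset.sum_ite_eq,
      Finset.filter_eq, eq_comm] <;>
    (rw [Finset.filter_false_of_mem (fun x _ hx => h (hx.1.trans hx.2.symm))]; simp)

lemma sum_choi_diag {n m : Type*} [Fintype n] [DecidableEq n] [Fintype m]
    (𝓔 : Matrix n n ℂ →ₗ[ℂ] Matrix m m ℂ) (hTP : ∀ σ, (𝓔 σ).trace = σ.trace) (k l : n) :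
    ∑ i : m, choi 𝓔 (i, k) (i, l)
      = (1 / (Fintype.card n : ℂ)) * if k = l then 1 else 0 := by
  have h : ∑ i : m, choi 𝓔 (i, k) (i, l)
      = (1 / (Fintype.card n : ℂ)) * (𝓔 (Matrix.single k l 1)).trace := by
    simp [choi, Matrix.trace, Matrix.diag, Finset.mul_sum]
  rw [h, hTP, trace_stdBasisMatrix']


section Backward

variable {A A' B B' C C' : Type*}
  [Fintype A] [Fintype A'] [Fintype B] [Fintype B'] [Fintype C] [Fintype C']
  [DecidableEq A'] [DecidableEq B'] [DecidableEq C']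
  [Nonempty A'] [Nonempty B'] [Nonempty C']

lemma rho_diag_sum
    (𝓔₁ : Matrix (A' × B') (A' × B') ℂ →ₗ[ℂ] Matrix (A × B) (A × B) ℂ)
    (hTP : ∀ σ, (𝓔₁ σ).trace = σ.trace)
    (ρ : Matrix ((A × B × C) × (A' × B' × C')) ((A × B × C) × (A' × B' × C')) ℂ)
    (hC : trOutC ρ = choi 𝓔₁ ⊗ₖ ((1 / (Fintype.card C' : ℂ)) • (1 : Matrix C' C' ℂ)))
    (k l : A' × B' × C') :
    ∑ i : A × B × C, ρ (i, k) (i, l)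
      = (1 / (Fintype.card (A' × B' × C') : ℂ)) * if k = l then 1 else 0 := by
  obtain ⟨k₁, k₂, k₃⟩ := k; obtain ⟨l₁, l₂, l₃⟩ := l
  have h' := Matrix.ext_iff.2 hC
  calc ∑ i : A × B × C, ρ (i, (k₁,k₂,k₃)) (i, (l₁,l₂,l₃))
      = ∑ a, ∑ b, ∑ c, ρ ((a,b,c), (k₁,k₂,k₃)) ((a,b,c), (l₁,l₂,l₃)) := by
        simp only [Fintype.sum_prod_type]
    _ = ∑ a, ∑ b, choi 𝓔₁ ((a,b),(k₁,k₂)) ((a,b),(l₁,l₂))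
          * ((1 / (Fintype.card C' : ℂ)) * if k₃ = l₃ then 1 else 0) := by
        refine Finset.sum_congr rfl fun a _ => Finset.sum_congr rfl fun b _ => ?_
        have h2 := h' (((a,b),(k₁,k₂)),k₃) (((a,b),(l₁,l₂)),l₃)
        refine Eq.trans ?_ (h2.trans ?_)
        · rfl
        · by_cases h3 : k₃ = l₃ <;>
            simp [Matrix.kroneckerMap_apply, Matrix.one_apply, h3]
    _ = (∑ ab : A × B, choi 𝓔₁ (ab,(k₁,k₂)) (ab,(l₁,l₂)))
          * ((1 / (Fintype.card C' : ℂ)) * if k₃ = l₃ then 1 else 0) := by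
        rw [Fintype.sum_prod_type, Finset.sum_mul]
        exact Finset.sum_congr rfl fun a _ => (Finset.sum_mul _ _ _).symm
    _ = ((1 / (Fintype.card (A' × B') : ℂ)) * if (k₁,k₂) = (l₁,l₂) then 1 else 0)
          * ((1 / (Fintype.card C' : ℂ)) * if k₃ = l₃ then 1 else 0) := by
        rw [sum_choi_diag 𝓔₁ hTP]
    _ = (1 / (Fintype.card (A' × B' × C') : ℂ))
          * if ((k₁,k₂,k₃) : A' × B' × C') = (l₁,l₂,l₃) then 1 else 0 := by
        by_cases h12 : (k₁,k₂) = (l₁,l₂) <;> by_cases h3 : k₃ = l₃ <;>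
          simp_all [Prod.ext_iff, Fintype.card_prod] <;> ring

lemma marg_trC3
    (𝓔₁ : Matrix (A' × B') (A' × B') ℂ →ₗ[ℂ] Matrix (A × B) (A × B) ℂ)
    (ρ : Matrix ((A × B × C) × (A' × B' × C')) ((A × B × C) × (A' × B' × C')) ℂ)
    (hC : trOutC ρ = choi 𝓔₁ ⊗ₖ ((1 / (Fintype.card C' : ℂ)) • (1 : Matrix C' C' ℂ)))
    (M : Matrix (A' × B' × C') (A' × B' × C') ℂ) :
    trC3 (fromChoi ρ M) = 𝓔₁ (trC3 M) := by
  have h' := Matrix.ext_iff.2 hC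
  have hAB' : (Fintype.card (A' × B') : ℂ) ≠ 0 := by simp [Fintype.card_ne_zero]
  have hC'0 : (Fintype.card C' : ℂ) ≠ 0 := by simp [Fintype.card_ne_zero]
  have hone : (Fintype.card (A' × B' × C') : ℂ)
      * ((1 / (Fintype.card (A' × B') : ℂ)) * (1 / (Fintype.card C' : ℂ))) = 1 := by
    have hsplit : (Fintype.card (A' × B' × C') : ℂ)
        = (Fintype.card (A' × B') : ℂ) * (Fintype.card C' : ℂ) := by
      simp [Fintype.card_prod]; ring
    rw [hsplit]; field_simp
  ext i₁ j₁
  calc trC3 (fromChoi ρ M) i₁ j₁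
      = ∑ c, (Fintype.card (A' × B' × C') : ℂ)
          * ∑ k, ∑ l, ρ ((i₁.1,i₁.2,c),k) ((j₁.1,j₁.2,c),l) * M k l := rfl
    _ = (Fintype.card (A' × B' × C') : ℂ)
          * ∑ k, ∑ l, (∑ c, ρ ((i₁.1,i₁.2,c),k) ((j₁.1,j₁.2,c),l)) * M k l := by
        rw [← Finset.mul_sum]
        congr 1
        rw [Finset.sum_comm]
        refine Finset.sum_congr rfl fun k _ => ?_
        rw [Finset.sum_comm]
        exact Finset.sum_congr rfl fun l _ => (Finset.sum_mul _ _ _).symm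
    _ = (Fintype.card (A' × B' × C') : ℂ)
          * ∑ k, ∑ l, (choi 𝓔₁ (i₁, (k.1,k.2.1)) (j₁, (l.1,l.2.1))
              * ((1 / (Fintype.card C' : ℂ)) * if k.2.2 = l.2.2 then 1 else 0)) * M k l := by
        refine congrArg _ (Finset.sum_congr rfl fun k _ => Finset.sum_congr rfl fun l _ => ?_)
        congr 1
        refine (h' ((i₁,(k.1,k.2.1)),k.2.2) ((j₁,(l.1,l.2.1)),l.2.2)).trans ?_
        by_cases h3 : k.2.2 = l.2.2 <;>
          simp [Matrix.kroneckerMap_apply, Matrix.one_apply, h3]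
    _ = (Fintype.card (A' × B' × C') : ℂ) * ∑ k₁, ∑ k₂, ∑ k₃, ∑ l₁, ∑ l₂,
          (choi 𝓔₁ (i₁,(k₁,k₂)) (j₁,(l₁,l₂)) * (1 / (Fintype.card C' : ℂ)))
            * M (k₁,k₂,k₃) (l₁,l₂,k₃) := by
        congr 1
        simp only [Fintype.sum_prod_type]
        refine Finset.sum_congr rfl fun k₁ _ => Finset.sum_congr rfl fun k₂ _ =>
          Finset.sum_congr rfl fun k₃ _ => Finset.sum_congr rfl fun l₁ _ =>
          Finset.sum_congr rfl fun l₂ _ => ?_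
        simp only [mul_ite, mul_one, mul_zero, ite_mul, zero_mul]
        rw [Finset.sum_ite_eq]
        simp
    _ = 𝓔₁ (trC3 M) i₁ j₁ := by
        rw [apply_eq_sum 𝓔₁ (trC3 M) i₁ j₁]
        simp only [Fintype.sum_prod_type, Finset.mul_sum]
        refine Finset.sum_congr rfl fun k₁ _ => Finset.sum_congr rfl fun k₂ _ => ?_
        conv_lhs => rw [Finset.sum_comm]
        refine Finset.sum_congr rfl fun l₁ _ => ?_
        conv_lhs => rw [Finset.sum_comm]
        refine Finset.sum_congr rfl fun l₂ _ => ?_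
        have htr : trC3 M (k₁,k₂) (l₁,l₂) = ∑ k₃, M (k₁,k₂,k₃) (l₁,l₂,k₃) := rfl
        rw [htr, Finset.sum_mul]
        refine Finset.sum_congr rfl fun k₃ _ => ?_
        simp only [choi, Matrix.of_apply]
        linear_combination (𝓔₁ (Matrix.single ((k₁,k₂) : A' × B')
          ((l₁,l₂) : A' × B') 1) i₁ j₁ * M (k₁,k₂,k₃) (l₁,l₂,k₃)) * hone

lemma marg_trL
    (𝓔₂ : Matrix (B' × C') (B' × C') ℂ →ₗ[ℂ] Matrix (B × C) (B × C) ℂ)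
    (ρ : Matrix ((A × B × C) × (A' × B' × C')) ((A × B × C) × (A' × B' × C')) ℂ)
    (hA : trOutA ρ = choi 𝓔₂ ⊗ₖ ((1 / (Fintype.card A' : ℂ)) • (1 : Matrix A' A' ℂ)))
    (M : Matrix (A' × B' × C') (A' × B' × C') ℂ) :
    trL (fromChoi ρ M) = 𝓔₂ (trL M) := by
  have h' := Matrix.ext_iff.2 hA
  have hBC' : (Fintype.card (B' × C') : ℂ) ≠ 0 := by simp [Fintype.card_ne_zero]
  have hA'0 : (Fintype.card A' : ℂ) ≠ 0 := by simp [Fintype.card_ne_zero]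
  have hone : (Fintype.card (A' × B' × C') : ℂ)
      * ((1 / (Fintype.card (B' × C') : ℂ)) * (1 / (Fintype.card A' : ℂ))) = 1 := by
    have hsplit : (Fintype.card (A' × B' × C') : ℂ)
        = (Fintype.card (B' × C') : ℂ) * (Fintype.card A' : ℂ) := by
      simp [Fintype.card_prod]; ring
    rw [hsplit]; field_simp
  ext i₁ j₁
  calc trL (fromChoi ρ M) i₁ j₁
      = ∑ a, (Fintype.card (A' × B' × C') : ℂ)
          * ∑ k, ∑ l, ρ ((a,i₁),k) ((a,j₁),l) * M k l := rfl
    _ = (Fintype.card (A' × B' × C') : ℂ)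
          * ∑ k, ∑ l, (∑ a, ρ ((a,i₁),k) ((a,j₁),l)) * M k l := by
        rw [← Finset.mul_sum]
        congr 1
        rw [Finset.sum_comm]
        refine Finset.sum_congr rfl fun k _ => ?_
        rw [Finset.sum_comm]
        exact Finset.sum_congr rfl fun l _ => (Finset.sum_mul _ _ _).symm
    _ = (Fintype.card (A' × B' × C') : ℂ)
          * ∑ k, ∑ l, (choi 𝓔₂ (i₁, (k.2.1,k.2.2)) (j₁, (l.2.1,l.2.2))
              * ((1 / (Fintype.card A' : ℂ)) * if k.1 = l.1 then 1 else 0)) * M k l := by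
        refine congrArg _ (Finset.sum_congr rfl fun k _ => Finset.sum_congr rfl fun l _ => ?_)
        congr 1
        refine (h' ((i₁,(k.2.1,k.2.2)),k.1) ((j₁,(l.2.1,l.2.2)),l.1)).trans ?_
        by_cases h3 : k.1 = l.1 <;>
          simp [Matrix.kroneckerMap_apply, Matrix.one_apply, h3]
    _ = (Fintype.card (A' × B' × C') : ℂ) * ∑ k₁, ∑ k₂, ∑ k₃, ∑ l₂, ∑ l₃,
          (choi 𝓔₂ (i₁,(k₂,k₃)) (j₁,(l₂,l₃)) * (1 / (Fintype.card A' : ℂ)))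
            * M (k₁,k₂,k₃) (k₁,l₂,l₃) := by
        congr 1
        simp only [Fintype.sum_prod_type]
        refine Finset.sum_congr rfl fun k₁ _ => Finset.sum_congr rfl fun k₂ _ =>
          Finset.sum_congr rfl fun k₃ _ => ?_
        conv_lhs => rw [Finset.sum_comm]
        refine Finset.sum_congr rfl fun l₂ _ => ?_
        conv_lhs => rw [Finset.sum_comm]
        refine Finset.sum_congr rfl fun l₃ _ => ?_
        simp only [mul_ite, mul_one, mul_zero, ite_mul, zero_mul]
        rw [Finset.sum_ite_eq]
        simp
    _ = 𝓔₂ (trL M) i₁ j₁ := by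
        rw [apply_eq_sum 𝓔₂ (trL M) i₁ j₁]
        simp only [Fintype.sum_prod_type, Finset.mul_sum]
        conv_lhs => rw [Finset.sum_comm]
        refine Finset.sum_congr rfl fun k₂ _ => ?_
        conv_lhs => rw [Finset.sum_comm]
        refine Finset.sum_congr rfl fun k₃ _ => ?_
        conv_lhs => rw [Finset.sum_comm]
        refine Finset.sum_congr rfl fun l₂ _ => ?_
        conv_lhs => rw [Finset.sum_comm]
        refine Finset.sum_congr rfl fun l₃ _ => ?_
        have htr : trL M (k₂,k₃) (l₂,l₃) = ∑ k₁, M (k₁,k₂,k₃) (k₁,l₂,l₃) := rfl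
        rw [htr, Finset.sum_mul]
        refine Finset.sum_congr rfl fun k₁ _ => ?_
        simp only [choi, Matrix.of_apply]
        linear_combination (𝓔₂ (Matrix.single ((k₂,k₃) : B' × C')
          ((l₂,l₃) : B' × C') 1) i₁ j₁ * M (k₁,k₂,k₃) (k₁,l₂,l₃)) * hone

end Backward

end SDPAux

/-- SDP formulation of the channel marginal problem: two channels are compatible iff
there is a positive semidefinite matrix whose partial traces reproduce the local
Choi matrices tensored with maximally mixed identities. -/
theorem compatible_iff_sdp
    {A A' B B' C C' : Type*}
    [Fintype A] [DecidableEq A] [Nonempty A] [Fintype A'] [DecidableEq A'] [Nonempty A']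
    [Fintype B] [DecidableEq B] [Nonempty B] [Fintype B'] [DecidableEq B'] [Nonempty B']
    [Fintype C] [DecidableEq C] [Nonempty C] [Fintype C'] [DecidableEq C'] [Nonempty C']
    (𝓔₁ : Matrix (A' × B') (A' × B') ℂ →ₗ[ℂ] Matrix (A × B) (A × B) ℂ)
    (𝓔₂ : Matrix (B' × C') (B' × C') ℂ →ₗ[ℂ] Matrix (B × C) (B × C) ℂ)
    (h₁ : IsChannel 𝓔₁) (h₂ : IsChannel 𝓔₂) :
    Compatible 𝓔₁ 𝓔₂ ↔
      ∃ ρ : Matrix ((A × B × C) × (A' × B' × C')) ((A × B × C) × (A' × B' × C')) ℂ,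
        ρ.PosSemidef ∧
        trOutC ρ = choi 𝓔₁ ⊗ₖ ((1 / (Fintype.card C' : ℂ)) • (1 : Matrix C' C' ℂ)) ∧
        trOutA ρ = choi 𝓔₂ ⊗ₖ ((1 / (Fintype.card A' : ℂ)) • (1 : Matrix A' A' ℂ)) := by
  have hsplitC : (Fintype.card (A' × B' × C') : ℂ)
      = (Fintype.card (A' × B') : ℂ) * (Fintype.card C' : ℂ) := by
    simp [Fintype.card_prod]; ring
  have hsplitA : (Fintype.card (A' × B' × C') : ℂ)
      = (Fintype.card (B' × C') : ℂ) * (Fintype.card A' : ℂ) := by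
    simp [Fintype.card_prod]; ring
  constructor
  · rintro ⟨𝓔, h𝓔, hmarg⟩
    have hC : ∀ M, trC3 (𝓔 M) = 𝓔₁ (trC3 M) := fun M => by
      simpa using SDPAux.linearMap_eq_of_isState (SDPAux.trC3L A B C ∘ₗ 𝓔)
        (𝓔₁ ∘ₗ SDPAux.trC3L A' B' C')
        (fun σ hσ => by simpa using (hmarg σ hσ).1) M
    have hA : ∀ M, trL (𝓔 M) = 𝓔₂ (trL M) := fun M => by
      simpa using SDPAux.linearMap_eq_of_isState (SDPAux.trLL A (B × C) ∘ₗ 𝓔)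
        (𝓔₂ ∘ₗ SDPAux.trLL A' (B' × C'))
        (fun σ hσ => by simpa using (hmarg σ hσ).2) M
    refine ⟨choi 𝓔, h𝓔.2, ?_, ?_⟩
    · ext ⟨⟨i₁, i₂⟩, i₃⟩ ⟨⟨j₁, j₂⟩, j₃⟩
      calc trOutC (choi 𝓔) ((i₁,i₂),i₃) ((j₁,j₂),j₃)
          = ∑ c, (1 / (Fintype.card (A' × B' × C') : ℂ))
              * 𝓔 (Matrix.single (i₂.1,i₂.2,i₃) (j₂.1,j₂.2,j₃) 1)
                  (i₁.1,i₁.2,c) (j₁.1,j₁.2,c) := rfl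
        _ = (1 / (Fintype.card (A' × B' × C') : ℂ))
              * trC3 (𝓔 (Matrix.single (i₂.1,i₂.2,i₃) (j₂.1,j₂.2,j₃) 1)) i₁ j₁ := by
            rw [← Finset.mul_sum]; rfl
        _ = (1 / (Fintype.card (A' × B' × C') : ℂ))
              * (𝓔₁ (trC3 (Matrix.single ((i₂.1,i₂.2,i₃) : A' × B' × C')
                  (j₂.1,j₂.2,j₃) 1))) i₁ j₁ := by rw [hC]
        _ = (1 / (Fintype.card (A' × B' × C') : ℂ))
              * ((if i₃ = j₃ then
                    𝓔₁ (Matrix.single ((i₂.1,i₂.2) : A' × B') (j₂.1,j₂.2) 1)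
                  else 0) i₁ j₁) := by
            rw [SDPAux.trC3_stdBasisMatrix]
            by_cases h3 : i₃ = j₃ <;> simp [h3]
        _ = (choi 𝓔₁ ⊗ₖ ((1 / (Fintype.card C' : ℂ)) • (1 : Matrix C' C' ℂ)))
              (((i₁,i₂),i₃)) (((j₁,j₂),j₃)) := by
            by_cases h3 : i₃ = j₃
            · simp only [h3, if_true, Matrix.kroneckerMap_apply, Matrix.smul_apply,
                Matrix.one_apply_eq, smul_eq_mul, mul_one, choi, Matrix.of_apply, Prod.mk.eta]
              rw [hsplitC]
              ring
            · simp [choi, Matrix.kroneckerMap_apply, Matrix.one_apply, h3]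
    · ext ⟨⟨i₁, i₂⟩, i₃⟩ ⟨⟨j₁, j₂⟩, j₃⟩
      calc trOutA (choi 𝓔) ((i₁,i₂),i₃) ((j₁,j₂),j₃)
          = ∑ a, (1 / (Fintype.card (A' × B' × C') : ℂ))
              * 𝓔 (Matrix.single (i₃,i₂.1,i₂.2) (j₃,j₂.1,j₂.2) 1)
                  (a,i₁.1,i₁.2) (a,j₁.1,j₁.2) := rfl
        _ = (1 / (Fintype.card (A' × B' × C') : ℂ))
              * trL (𝓔 (Matrix.single (i₃,i₂.1,i₂.2) (j₃,j₂.1,j₂.2) 1)) i₁ j₁ := by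
            rw [← Finset.mul_sum]; rfl
        _ = (1 / (Fintype.card (A' × B' × C') : ℂ))
              * (𝓔₂ (trL (Matrix.single ((i₃,i₂.1,i₂.2) : A' × B' × C')
                  (j₃,j₂.1,j₂.2) 1))) i₁ j₁ := by rw [hA]
        _ = (1 / (Fintype.card (A' × B' × C') : ℂ))
              * ((if i₃ = j₃ then
                    𝓔₂ (Matrix.single ((i₂.1,i₂.2) : B' × C') (j₂.1,j₂.2) 1)
                  else 0) i₁ j₁) := by
            rw [SDPAux.trL_stdBasisMatrix]
            by_cases h3 : i₃ = j₃ <;> simp [h3]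
        _ = (choi 𝓔₂ ⊗ₖ ((1 / (Fintype.card A' : ℂ)) • (1 : Matrix A' A' ℂ)))
              (((i₁,i₂),i₃)) (((j₁,j₂),j₃)) := by
            by_cases h3 : i₃ = j₃
            · simp only [h3, if_true, Matrix.kroneckerMap_apply, Matrix.smul_apply,
                Matrix.one_apply_eq, smul_eq_mul, mul_one, choi, Matrix.of_apply, Prod.mk.eta]
              rw [hsplitA]
              ring
            · simp [choi, Matrix.kroneckerMap_apply, Matrix.one_apply, h3]
  · rintro ⟨ρ, hρ, hco, hao⟩
    have hN : (Fintype.card (A' × B' × C') : ℂ) ≠ 0 := by simp [Fintype.card_ne_zero]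
    refine ⟨SDPAux.fromChoi ρ, ⟨?_, ?_⟩,
      fun σ _ => ⟨by rw [SDPAux.marg_trC3 𝓔₁ ρ hco σ], by rw [SDPAux.marg_trL 𝓔₂ ρ hao σ]⟩⟩
    · intro X
      have hsum := SDPAux.rho_diag_sum 𝓔₁ h₁.1 ρ hco
      calc (SDPAux.fromChoi ρ X).trace
          = ∑ i, (Fintype.card (A' × B' × C') : ℂ) * ∑ k, ∑ l, ρ (i,k) (i,l) * X k l := rfl
        _ = (Fintype.card (A' × B' × C') : ℂ)
              * ∑ k, ∑ l, (∑ i, ρ (i,k) (i,l)) * X k l := by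
            rw [← Finset.mul_sum]
            congr 1
            rw [Finset.sum_comm]
            refine Finset.sum_congr rfl fun k _ => ?_
            rw [Finset.sum_comm]
            exact Finset.sum_congr rfl fun l _ => (Finset.sum_mul _ _ _).symm
        _ = (Fintype.card (A' × B' × C') : ℂ)
              * ∑ k, ∑ l, ((1 / (Fintype.card (A' × B' × C') : ℂ))
                  * if k = l then 1 else 0) * X k l := by
            refine congrArg _ (Finset.sum_congr rfl fun k _ =>
              Finset.sum_congr rfl fun l _ => ?_)
            rw [hsum]
        _ = X.trace := by
            simp only [mul_ite, mul_one, mul_zero, ite_mul, zero_mul, Finset.sum_ite_eq,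
              Finset.mem_univ, if_true]
            rw [← Finset.mul_sum, ← mul_assoc, mul_one_div, div_self hN, one_mul]
            rfl
    · show (choi (SDPAux.fromChoi ρ)).PosSemidef
      rw [SDPAux.choi_fromChoi]
      exact hρ
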